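/- Let (H, m, u, Δ, ε) be a bialgebra over a commutative ring k equipped with k-submodules Hⁿ (n ≥ 0) such that Hⁿ ⊆ Hⁿ⁺¹ for all n, H = ⋃_{n≥0} Hⁿ, Δ(Hⁿ) ⊆ Σ_{p+q=n} (image of H^p ⊗ H^q in H ⊗ H) for all n, Hⁿ = im(u) ⊕ (Hⁿ ∩ ker ε) for all n, and H⁰ = im(u) (a connected coaugmented cofiltered bialgebra). Then H is a Hopf algebra: there is a k-linear antipode S : H → H satisfying m ∘ (S ⊗ id) ∘ Δ = u ∘ ε = m ∘ (id ⊗ S) ∘ Δ, given explicitly by S(1_H) = 1_H and, for x ∈ ker ε, S(x) = −x + Σ_{n≥1} (−1)^{n+1} mⁿ(Δ̄ⁿ(x)), where Δ̄(x) := Δ(x) − 1_H ⊗ x − x ⊗ 1_H lies in ker ε ⊗ ker ε, Δ̄ⁿ and mⁿ denote the n-fold iterated reduced coproduct and iterated multiplication, and only finitely many terms of the sum are nonzero for each x. -/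

import Mathlib

open scoped TensorProduct

/-- The reduced coproduct `Δ̄(x) = Δ(x) − 1 ⊗ x − x ⊗ 1` of a bialgebra. -/
noncomputable def redComul (R H : Type*) [CommRing R] [Ring H] [Bialgebra R H] : H →ₗ[R] H ⊗[R] H where
  toFun x := Coalgebra.comul x - (1 : H) ⊗ₜ[R] x - x ⊗ₜ[R] (1 : H)
  map_add' x y := by
    simp only [map_add, TensorProduct.tmul_add, TensorProduct.add_tmul]
    module
  map_smul' c x := by
    simp only [map_smul, TensorProduct.tmul_smul, TensorProduct.smul_tmul',
      RingHom.id_apply, smul_sub]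

/-- The `n`-fold convolution iterate `mⁿ ∘ Δ̄ⁿ` (with `m⁰ ∘ Δ̄⁰ = id`), defined
recursively by `m ∘ (id ⊗ (mⁿ⁻¹ ∘ Δ̄ⁿ⁻¹)) ∘ Δ̄`. -/
noncomputable def convIter (R H : Type*) [CommRing R] [Ring H] [Bialgebra R H] : ℕ → (H →ₗ[R] H)
  | 0 => LinearMap.id
  | n + 1 =>
      (LinearMap.mul' R H) ∘ₗ (LinearMap.lTensor H (convIter R H n)) ∘ₗ redComul R H

section aux
open LinearMap TensorProduct
variable {R H : Type*} [CommRing R] [Ring H] [Bialgebra R H]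

lemma redComul_apply (x : H) :
    redComul R H x = Coalgebra.comul x - (1 : H) ⊗ₜ[R] x - x ⊗ₜ[R] (1 : H) := rfl

lemma redComul_def :
    redComul R H = Coalgebra.comul - TensorProduct.mk R H H 1 - (TensorProduct.mk R H H).flip 1 := by
  ext x; simp [redComul_apply]

lemma e1 (t : H ⊗[R] H) :
    (TensorProduct.assoc R H H H) ((TensorProduct.mk R H H 1).rTensor H t) = (1:H) ⊗ₜ[R] t := by
  induction t with
  | zero => simp
  | tmul a b => simp
  | add s t hs ht => simp [map_add, tmul_add, hs, ht]

lemma e2 (t : H ⊗[R] H) :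
    (TensorProduct.assoc R H H H) (((TensorProduct.mk R H H).flip 1).rTensor H t)
      = (TensorProduct.mk R H H 1).lTensor H t := by
  induction t with
  | zero => simp
  | tmul a b => simp
  | add s t hs ht => simp [map_add, hs, ht]

lemma e3 (t : H ⊗[R] H) :
    (TensorProduct.assoc R H H H) (t ⊗ₜ[R] (1:H))
      = ((TensorProduct.mk R H H).flip 1).lTensor H t := by
  induction t with
  | zero => rw [zero_tmul, LinearEquiv.map_zero, LinearMap.map_zero]
  | tmul a b => simp
  | add s t hs ht => rw [add_tmul, LinearEquiv.map_add, LinearMap.map_add, hs, ht]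

lemma redComul_coassoc :
    LinearMap.lTensor H (redComul R H) ∘ₗ redComul R H
      = (TensorProduct.assoc R H H H).toLinearMap ∘ₗ
          LinearMap.rTensor H (redComul R H) ∘ₗ redComul R H := by
  ext x
  have hc := Coalgebra.coassoc_apply (R := R) x
  simp only [comp_apply, LinearEquiv.coe_coe]
  rw [redComul_apply, redComul_def]
  simp only [lTensor_sub, rTensor_sub, LinearMap.sub_apply, map_sub,
    lTensor_tmul, rTensor_tmul, mk_apply, flip_apply, Bialgebra.comul_one,
    Algebra.TensorProduct.one_def, e1, e2, e3, assoc_tmul, tmul_sub, sub_tmul, hc]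
  abel

lemma e4 (f : H →ₗ[R] H) :
    LinearMap.lTensor H (LinearMap.rTensor H f) ∘ₗ (TensorProduct.assoc R H H H).toLinearMap
      = (TensorProduct.assoc R H H H).toLinearMap ∘ₗ
          LinearMap.rTensor H (LinearMap.lTensor H f) := by
  apply TensorProduct.ext_threefold
  intro a b c
  simp

lemma e5 :
    LinearMap.mul' R H ∘ₗ LinearMap.lTensor H (LinearMap.mul' R H) ∘ₗ
        (TensorProduct.assoc R H H H).toLinearMap
      = LinearMap.mul' R H ∘ₗ LinearMap.rTensor H (LinearMap.mul' R H) := by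
  apply TensorProduct.ext_threefold
  intro a b c
  simp [LinearMap.mul'_apply, mul_assoc]

noncomputable def Lop (f : H →ₗ[R] H) : H →ₗ[R] H :=
  LinearMap.mul' R H ∘ₗ LinearMap.lTensor H f ∘ₗ redComul R H

noncomputable def Rop (f : H →ₗ[R] H) : H →ₗ[R] H :=
  LinearMap.mul' R H ∘ₗ LinearMap.rTensor H f ∘ₗ redComul R H

lemma Lop_Rop_comm (f : H →ₗ[R] H) : Lop (Rop f) = Rop (Lop f) := by
  unfold Lop Rop
  rw [lTensor_comp, lTensor_comp, rTensor_comp, rTensor_comp]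
  calc LinearMap.mul' R H ∘ₗ
      (lTensor H (LinearMap.mul' R H) ∘ₗ lTensor H (rTensor H f) ∘ₗ lTensor H (redComul R H)) ∘ₗ
        redComul R H
      = LinearMap.mul' R H ∘ₗ lTensor H (LinearMap.mul' R H) ∘ₗ lTensor H (rTensor H f) ∘ₗ
          (lTensor H (redComul R H) ∘ₗ redComul R H) := by
        simp only [LinearMap.comp_assoc]
    _ = LinearMap.mul' R H ∘ₗ lTensor H (LinearMap.mul' R H) ∘ₗ
          (lTensor H (rTensor H f) ∘ₗ (TensorProduct.assoc R H H H).toLinearMap) ∘ₗ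
          rTensor H (redComul R H) ∘ₗ redComul R H := by
        rw [redComul_coassoc]; simp only [LinearMap.comp_assoc]
    _ = (LinearMap.mul' R H ∘ₗ lTensor H (LinearMap.mul' R H) ∘ₗ
          (TensorProduct.assoc R H H H).toLinearMap) ∘ₗ rTensor H (lTensor H f) ∘ₗ
          rTensor H (redComul R H) ∘ₗ redComul R H := by
        rw [e4]; simp only [LinearMap.comp_assoc]
    _ = LinearMap.mul' R H ∘ₗ
          (rTensor H (LinearMap.mul' R H) ∘ₗ rTensor H (lTensor H f) ∘ₗ
            rTensor H (redComul R H)) ∘ₗ redComul R H := by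
        rw [e5]; simp only [LinearMap.comp_assoc]

lemma convIter_succ (n : ℕ) : convIter R H (n+1) = Lop (convIter R H n) := rfl

lemma convIter_succ_r (n : ℕ) : convIter R H (n+1) = Rop (convIter R H n) := by
  induction n with
  | zero =>
      rw [convIter_succ]
      show Lop LinearMap.id = Rop LinearMap.id
      simp [Lop, Rop, lTensor_id, rTensor_id]
  | succ n ih =>
      rw [convIter_succ, ih, Lop_Rop_comm, ← convIter_succ, ih]

lemma sum_submodule_le {ι : Type*} {M : Type*} [AddCommGroup M] [Module R M]
    (s : Finset ι) (P : ι → Submodule R M) (Q : Submodule R M)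
    (h : ∀ i ∈ s, P i ≤ Q) : (∑ i ∈ s, P i) ≤ Q := by
  classical
  induction s using Finset.induction with
  | empty => simp
  | insert a s hne ih =>
      rw [Finset.sum_insert hne]
      exact sup_le (h a (Finset.mem_insert_self a s))
        (ih fun i hi => h i (Finset.mem_insert_of_mem hi))

end aux

/-- A connected coaugmented cofiltered bialgebra `(H, m, u, Δ, ε)`
over a commutative ring `k` is a Hopf algebra, with antipode `S` satisfying
`m ∘ (S ⊗ id) ∘ Δ = u ∘ ε = m ∘ (id ⊗ S) ∘ Δ`, given by `S(1) = 1` and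
`S(x) = −x + Σ_{n≥1} (−1)^{n+1} mⁿ(Δ̄ⁿ(x))` for `x ∈ ker ε`, where
`Δ̄(x) = Δ(x) − 1 ⊗ x − x ⊗ 1` lies in `ker ε ⊗ ker ε` and only finitely many terms
of the sum are nonzero. -/

theorem connected_cofiltered_bialgebra_is_hopf
    (R H : Type) [CommRing R] [Ring H] [Bialgebra R H]
    (ℋ : ℕ → Submodule R H)
    -- `Hⁿ ⊆ Hⁿ⁺¹`
    (hmono : ∀ n : ℕ, ℋ n ≤ ℋ (n + 1))
    -- `H = ⋃ₙ Hⁿ`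
    (hexh : (⨆ n : ℕ, ℋ n) = ⊤)
    -- `Δ(Hⁿ) ⊆ Σ_{p+q=n} H^p ⊗ H^q` (image in `H ⊗ H`)
    (hcomul : ∀ n : ℕ, ∀ x ∈ ℋ n,
        Coalgebra.comul (R := R) x ∈
          ∑ pq ∈ Finset.HasAntidiagonal.antidiagonal n,
            Submodule.map₂ (TensorProduct.mk R H H) (ℋ pq.1) (ℋ pq.2))
    -- `Hⁿ = im(u) ⊕ (Hⁿ ∩ ker ε)`
    (hsplit : ∀ n : ℕ,
        ℋ n = LinearMap.range (Algebra.linearMap R H)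
            ⊔ (ℋ n ⊓ LinearMap.ker (Coalgebra.counit (R := R) (A := H))))
    (hdisj : ∀ n : ℕ,
        Disjoint (LinearMap.range (Algebra.linearMap R H))
          (ℋ n ⊓ LinearMap.ker (Coalgebra.counit (R := R) (A := H))))
    -- connectedness: `H⁰ = im(u)`
    (hconn : ℋ 0 = LinearMap.range (Algebra.linearMap R H)) :
    ∃ S : H →ₗ[R] H,
      (LinearMap.mul' R H) ∘ₗ (LinearMap.rTensor H S) ∘ₗ Coalgebra.comul
          = (Algebra.linearMap R H) ∘ₗ Coalgebra.counit
      ∧ (LinearMap.mul' R H) ∘ₗ (LinearMap.lTensor H S) ∘ₗ Coalgebra.comul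
          = (Algebra.linearMap R H) ∘ₗ Coalgebra.counit
      ∧ S 1 = 1
      ∧ ∀ x : H, Coalgebra.counit (R := R) x = 0 →
          redComul R H x ∈
            Submodule.map₂ (TensorProduct.mk R H H)
              (LinearMap.ker (Coalgebra.counit (R := R) (A := H)))
              (LinearMap.ker (Coalgebra.counit (R := R) (A := H)))
          ∧ ∃ N : ℕ, (∀ n : ℕ, N < n → convIter R H n x = 0)
              ∧ S x = -x + ∑ n ∈ Finset.Icc 1 N,
                  ((-1 : R) ^ (n + 1)) • convIter R H n x := by
  classical
  have hm : Monotone ℋ := monotone_nat_of_le_succ hmono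
  set u : R →ₗ[R] H := Algebra.linearMap R H with hu
  set ε : H →ₗ[R] R := Coalgebra.counit (R := R) (A := H) with hε
  set K : Submodule R H := LinearMap.ker ε with hKdef
  -- every element lies in some filtration level
  have hdeg : ∀ y : H, ∃ n, y ∈ ℋ n := by
    intro y
    have : y ∈ (⨆ n, ℋ n) := hexh ▸ Submodule.mem_top
    exact (Submodule.mem_iSup_of_directed ℋ hm.directed_le).1 this
  -- projection facts
  have hπ : ∀ n, ∀ x ∈ ℋ n, x - u (ε x) ∈ ℋ n ⊓ K := by
    intro n x hx
    rw [hsplit n] at hx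
    obtain ⟨a, ha, b, hb, rfl⟩ := Submodule.mem_sup.1 hx
    obtain ⟨c, rfl⟩ := ha
    have hεb : ε b = 0 := hb.2
    have h1 : ε (u c + b) = c := by
      simp [hε, hu, map_add] at hεb ⊢
      simp [hεb]
    rw [h1]
    simpa using hb
  have hzero : ℋ 0 ⊓ K = ⊥ := by
    rw [eq_bot_iff]
    intro x hx
    have h1 : x ∈ LinearMap.range u := by rw [← hconn]; exact hx.1
    exact (Submodule.mem_bot R).2 (Submodule.disjoint_def.1 (hdisj 0) x h1 hx)
  -- reduced coproduct goes down in filtration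
  have hred : ∀ n, ∀ x, x ∈ ℋ (n+1) → ε x = 0 →
      redComul R H x ∈ Submodule.map₂ (TensorProduct.mk R H H) (ℋ n ⊓ K) (ℋ n ⊓ K) := by
    intro n x hx hεx
    set Q := Submodule.map₂ (TensorProduct.mk R H H) (ℋ n ⊓ K) (ℋ n ⊓ K) with hQ
    set P : H →ₗ[R] H := LinearMap.id - u ∘ₗ ε with hP
    have hPval : ∀ a : H, P a = a - u (ε a) := fun a => rfl
    have hPmem : ∀ p, ∀ a ∈ ℋ p, P a ∈ ℋ p ⊓ K := fun p a ha => by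
      rw [hPval]; exact hπ p a ha
    have hP0 : ∀ a ∈ ℋ 0, P a = 0 := fun a ha => by
      have h := hPmem 0 a ha
      rw [hzero] at h
      exact (Submodule.mem_bot R).1 h
    have hPx : P x = x := by rw [hPval, hεx, map_zero, sub_zero]
    have hkey : (LinearMap.lTensor H P) ((LinearMap.rTensor H P) (Coalgebra.comul x)) ∈ Q := by
      have hΔ := hcomul (n+1) x hx
      have hle : (∑ pq ∈ Finset.HasAntidiagonal.antidiagonal (n+1),
          Submodule.map₂ (TensorProduct.mk R H H) (ℋ pq.1) (ℋ pq.2))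
          ≤ Submodule.comap (LinearMap.lTensor H P ∘ₗ LinearMap.rTensor H P) Q := by
        refine sum_submodule_le _ _ _ ?_
        rintro ⟨p, q⟩ hpq
        rw [Finset.HasAntidiagonal.mem_antidiagonal] at hpq
        rw [Submodule.map₂_le]
        intro a ha b hb
        simp only [Submodule.mem_comap, LinearMap.comp_apply, TensorProduct.mk_apply,
          LinearMap.rTensor_tmul, LinearMap.lTensor_tmul]
        rcases Nat.eq_zero_or_pos p with hp | hp
        · subst hp
          rw [hP0 a ha, TensorProduct.zero_tmul]
          exact Q.zero_mem
        rcases Nat.eq_zero_or_pos q with hq | hq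
        · subst hq
          rw [hP0 b hb, TensorProduct.tmul_zero]
          exact Q.zero_mem
        have h1 : P a ∈ ℋ n ⊓ K :=
          ⟨hm (by omega) (hPmem p a ha).1, (hPmem p a ha).2⟩
        have h2 : P b ∈ ℋ n ⊓ K :=
          ⟨hm (by omega) (hPmem q b hb).1, (hPmem q b hb).2⟩
        exact Submodule.apply_mem_map₂ _ h1 h2
      exact hle hΔ
    have hrT : (LinearMap.rTensor H P) (Coalgebra.comul x)
        = Coalgebra.comul x - (1:H) ⊗ₜ[R] x := by
      rw [hP, LinearMap.rTensor_sub, LinearMap.sub_apply, LinearMap.rTensor_id,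
        LinearMap.id_apply, LinearMap.rTensor_comp, LinearMap.comp_apply]
      rw [hε, Coalgebra.rTensor_counit_comul]
      simp [hu]
    have hlT : (LinearMap.lTensor H P) (Coalgebra.comul x)
        = Coalgebra.comul x - x ⊗ₜ[R] (1:H) := by
      rw [hP, LinearMap.lTensor_sub, LinearMap.sub_apply, LinearMap.lTensor_id,
        LinearMap.id_apply, LinearMap.lTensor_comp, LinearMap.comp_apply]
      rw [hε, Coalgebra.lTensor_counit_comul]
      simp [hu]
    rw [hrT, map_sub, hlT, LinearMap.lTensor_tmul, hPx] at hkey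
    have : redComul R H x = Coalgebra.comul x - x ⊗ₜ[R] (1:H) - (1:H) ⊗ₜ[R] x := by
      rw [redComul_apply]; abel
    rw [this]
    exact hkey
  -- nilpotence of the convolution iterates
  have hnil : ∀ n, ∀ x, x ∈ ℋ n → ε x = 0 → ∀ m, n ≤ m → convIter R H m x = 0 := by
    intro n
    induction n with
    | zero =>
        intro x hx hεx m _
        have hx0 : x ∈ ℋ 0 ⊓ K := ⟨hx, hεx⟩
        rw [hzero] at hx0
        rw [(Submodule.mem_bot R).1 hx0, map_zero]
    | succ n ih =>
        intro x hx hεx m hnm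
        obtain ⟨m, rfl⟩ : ∃ m', m = m' + 1 := ⟨m - 1, by omega⟩
        have hΔ := hred n x hx hεx
        have hker : Submodule.map₂ (TensorProduct.mk R H H) (ℋ n ⊓ K) (ℋ n ⊓ K)
            ≤ LinearMap.ker (LinearMap.mul' R H ∘ₗ LinearMap.lTensor H (convIter R H m)) := by
          rw [Submodule.map₂_le]
          intro a ha b hb
          simp only [LinearMap.mem_ker, LinearMap.comp_apply, TensorProduct.mk_apply,
            LinearMap.lTensor_tmul]
          rw [ih b hb.1 hb.2 m (by omega), TensorProduct.tmul_zero, map_zero]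
        have h0 := hker hΔ
        rw [LinearMap.mem_ker, LinearMap.comp_apply] at h0
        exact h0
  -- support finiteness
  have hfin : ∀ y : H, ε y = 0 →
      (Function.support fun k => ((-1:R)^(k+1)) • convIter R H k y).Finite := by
    intro y hεy
    obtain ⟨n, hn⟩ := hdeg y
    apply Set.Finite.subset (Finset.range (n+1)).finite_toSet
    intro k hk
    simp only [Function.mem_support] at hk
    by_contra hkn
    have hnk : n ≤ k := by
      simp only [Finset.coe_range, Set.mem_Iio, not_lt] at hkn
      omega
    exact hk (by rw [hnil n y hn hεy k hnk, smul_zero])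
  have hεπ : ∀ x : H, ε (x - u (ε x)) = 0 := by
    intro x
    simp [hε, hu, map_sub]
  -- construct the antipode
  obtain ⟨S, hSval⟩ : ∃ S : H →ₗ[R] H, ∀ x : H,
      S x = u (ε x) + ∑ᶠ k, ((-1:R)^(k+1)) • convIter R H k (x - u (ε x)) := by
    refine ⟨⟨⟨fun x => u (ε x) + ∑ᶠ k, ((-1:R)^(k+1)) • convIter R H k (x - u (ε x)),
      ?_⟩, ?_⟩, fun x => rfl⟩
    · intro x y
      simp only [map_add]
      have hxy : x + y - (u (ε x) + u (ε y)) = (x - u (ε x)) + (y - u (ε y)) := by abel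
      rw [hxy]
      have hsp : (fun k => ((-1:R)^(k+1)) •
            convIter R H k ((x - u (ε x)) + (y - u (ε y))))
          = fun k => ((-1:R)^(k+1)) • convIter R H k (x - u (ε x))
              + ((-1:R)^(k+1)) • convIter R H k (y - u (ε y)) := by
        funext k; rw [map_add, smul_add]
      rw [hsp, finsum_add_distrib (hfin _ (hεπ x)) (hfin _ (hεπ y))]
      abel
    · intro c x
      simp only [RingHom.id_apply]
      have hxy : c • x - u (ε (c • x)) = c • (x - u (ε x)) := by
        rw [map_smul, map_smul, smul_sub]
      have hεc : u (ε (c • x)) = c • u (ε x) := by rw [map_smul, map_smul]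
      rw [hxy, hεc]
      have hsp : (fun k => ((-1:R)^(k+1)) • convIter R H k (c • (x - u (ε x))))
          = fun k => c • (((-1:R)^(k+1)) • convIter R H k (x - u (ε x))) := by
        funext k; rw [map_smul, smul_comm]
      rw [hsp, ← smul_finsum' c (hfin _ (hεπ x)), smul_add]
  -- value of S on kernel elements, as a finite sum
  have hSK : ∀ x : H, ε x = 0 → ∀ n, x ∈ ℋ n →
      S x = ∑ k ∈ Finset.range (n+1), ((-1:R)^(k+1)) • convIter R H k x := by
    intro x hεx n hn
    have hx0 : x - u (ε x) = x := by rw [hεx, map_zero, sub_zero]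
    rw [hSval, hx0, hεx, map_zero, zero_add]
    apply finsum_eq_sum_of_support_subset
    intro k hk
    simp only [Function.mem_support] at hk
    simp only [Finset.coe_range, Set.mem_Iio]
    by_contra hkn
    exact hk (by rw [hnil n x hn hεx k (by omega), smul_zero])
  have hS1 : S 1 = 1 := by
    have h0 : (1:H) - u (ε 1) = 0 := by simp [hε, hu]
    rw [hSval, h0]
    simp [hε, hu]
  -- core computation, lTensor side
  have hcoreR : ∀ n, ∀ x, x ∈ ℋ n → ε x = 0 →
      (LinearMap.mul' R H) ((LinearMap.lTensor H S) (Coalgebra.comul x)) = 0 := by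
    intro n x hn hεx
    have hx1 : x ∈ ℋ (n+1) := hmono n hn
    have hΔ := hred n x hx1 hεx
    set N : ℕ := n + 1 with hN
    set T : H →ₗ[R] H := ∑ k ∈ Finset.range (N+1), ((-1:R)^(k+1)) • convIter R H k with hT
    have hagree : ∀ z, z ∈ ℋ n ⊓ K → S z = T z := by
      intro z hz
      have hεz : ε z = 0 := hz.2
      rw [hSK z hεz n hz.1, hT, LinearMap.sum_apply]
      simp only [LinearMap.smul_apply]
      apply Finset.sum_subset (Finset.range_subset_range.2 (by omega))
      intro k _ hk2
      rw [hnil n z hz.1 hεz k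
        (by simp only [Finset.mem_range, not_lt] at hk2; omega), smul_zero]
    have hST : (LinearMap.mul' R H) ((LinearMap.lTensor H S) (redComul R H x))
        = (LinearMap.mul' R H) ((LinearMap.lTensor H T) (redComul R H x)) := by
      have hker : Submodule.map₂ (TensorProduct.mk R H H) (ℋ n ⊓ K) (ℋ n ⊓ K)
          ≤ LinearMap.ker (LinearMap.mul' R H ∘ₗ LinearMap.lTensor H (S - T)) := by
        rw [Submodule.map₂_le]
        intro a ha b hb
        simp only [LinearMap.mem_ker, LinearMap.comp_apply, TensorProduct.mk_apply,
          LinearMap.lTensor_tmul, LinearMap.sub_apply]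
        rw [hagree b hb, sub_self, TensorProduct.tmul_zero, map_zero]
      have h0 := hker hΔ
      rw [LinearMap.mem_ker, LinearMap.comp_apply, LinearMap.lTensor_sub,
        LinearMap.sub_apply, map_sub, sub_eq_zero] at h0
      exact h0
    have hB : (LinearMap.mul' R H) ((LinearMap.lTensor H T) (redComul R H x))
        = ∑ k ∈ Finset.range (N+1), ((-1:R)^(k+1)) • convIter R H (k+1) x := by
      have hTl : LinearMap.lTensor H T = ∑ k ∈ Finset.range (N+1),
          ((-1:R)^(k+1)) • LinearMap.lTensor H (convIter R H k) := by
        rw [hT]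
        simp only [← LinearMap.coe_lTensorHom, map_sum, map_smul]
      rw [hTl, LinearMap.sum_apply, map_sum]
      refine Finset.sum_congr rfl fun k _ => ?_
      rw [LinearMap.smul_apply, map_smul]
      rfl
    have hΔx : Coalgebra.comul (R := R) x
        = redComul R H x + (1:H) ⊗ₜ[R] x + x ⊗ₜ[R] (1:H) := by
      rw [redComul_apply]; abel
    rw [hΔx, map_add, map_add, map_add, map_add, LinearMap.lTensor_tmul,
      LinearMap.lTensor_tmul, LinearMap.mul'_apply, LinearMap.mul'_apply, hS1, mul_one,
      one_mul, hST, hB, hSK x hεx N hx1]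
    set g : ℕ → H := fun k => ((-1:R)^(k+1)) • convIter R H k x with hgdef
    have hg : ∀ k, ((-1:R)^(k+1)) • convIter R H (k+1) x = -(g (k+1)) := by
      intro k
      rw [hgdef]
      simp [pow_succ, mul_smul]
    have hBneg : ∑ k ∈ Finset.range (N+1), ((-1:R)^(k+1)) • convIter R H (k+1) x
        = ∑ k ∈ Finset.range (N+1), -(g (k+1)) :=
      Finset.sum_congr rfl fun k _ => hg k
    have hsum : ∑ k ∈ Finset.range (N+1), -(g (k+1)) + ∑ k ∈ Finset.range (N+1), g k
        = g 0 - g (N+1) := by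
      rw [← Finset.sum_add_distrib]
      have h' : ∀ k ∈ Finset.range (N+1), -g (k+1) + g k = g k - g (k+1) := by
        intro k _; abel
      rw [Finset.sum_congr rfl h', Finset.sum_range_sub' g]
    have hg0 : g 0 = -x := by simp [hgdef, convIter]
    have hgN : g (N+1) = 0 := by
      rw [hgdef]
      simp only
      rw [hnil n x hn hεx (N+1) (by omega), smul_zero]
    rw [hBneg, hsum, hg0, hgN]
    abel
  -- core computation, rTensor side
  have hcoreL : ∀ n, ∀ x, x ∈ ℋ n → ε x = 0 →
      (LinearMap.mul' R H) ((LinearMap.rTensor H S) (Coalgebra.comul x)) = 0 := by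
    intro n x hn hεx
    have hx1 : x ∈ ℋ (n+1) := hmono n hn
    have hΔ := hred n x hx1 hεx
    set N : ℕ := n + 1 with hN
    set T : H →ₗ[R] H := ∑ k ∈ Finset.range (N+1), ((-1:R)^(k+1)) • convIter R H k with hT
    have hagree : ∀ z, z ∈ ℋ n ⊓ K → S z = T z := by
      intro z hz
      have hεz : ε z = 0 := hz.2
      rw [hSK z hεz n hz.1, hT, LinearMap.sum_apply]
      simp only [LinearMap.smul_apply]
      apply Finset.sum_subset (Finset.range_subset_range.2 (by omega))
      intro k _ hk2
      rw [hnil n z hz.1 hεz k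
        (by simp only [Finset.mem_range, not_lt] at hk2; omega), smul_zero]
    have hST : (LinearMap.mul' R H) ((LinearMap.rTensor H S) (redComul R H x))
        = (LinearMap.mul' R H) ((LinearMap.rTensor H T) (redComul R H x)) := by
      have hker : Submodule.map₂ (TensorProduct.mk R H H) (ℋ n ⊓ K) (ℋ n ⊓ K)
          ≤ LinearMap.ker (LinearMap.mul' R H ∘ₗ LinearMap.rTensor H (S - T)) := by
        rw [Submodule.map₂_le]
        intro a ha b hb
        simp only [LinearMap.mem_ker, LinearMap.comp_apply, TensorProduct.mk_apply,
          LinearMap.rTensor_tmul, LinearMap.sub_apply]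
        rw [hagree a ha, sub_self, TensorProduct.zero_tmul, map_zero]
      have h0 := hker hΔ
      rw [LinearMap.mem_ker, LinearMap.comp_apply, LinearMap.rTensor_sub,
        LinearMap.sub_apply, map_sub, sub_eq_zero] at h0
      exact h0
    have hB : (LinearMap.mul' R H) ((LinearMap.rTensor H T) (redComul R H x))
        = ∑ k ∈ Finset.range (N+1), ((-1:R)^(k+1)) • convIter R H (k+1) x := by
      have hTl : LinearMap.rTensor H T = ∑ k ∈ Finset.range (N+1),
          ((-1:R)^(k+1)) • LinearMap.rTensor H (convIter R H k) := by
        rw [hT]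
        simp only [← LinearMap.coe_rTensorHom, map_sum, map_smul]
      rw [hTl, LinearMap.sum_apply, map_sum]
      refine Finset.sum_congr rfl fun k _ => ?_
      rw [LinearMap.smul_apply, map_smul, convIter_succ_r k]
      rfl
    have hΔx : Coalgebra.comul (R := R) x
        = redComul R H x + (1:H) ⊗ₜ[R] x + x ⊗ₜ[R] (1:H) := by
      rw [redComul_apply]; abel
    rw [hΔx, map_add, map_add, map_add, map_add, LinearMap.rTensor_tmul,
      LinearMap.rTensor_tmul, LinearMap.mul'_apply, LinearMap.mul'_apply, hS1, mul_one,
      one_mul, hST, hB, hSK x hεx N hx1]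
    set g : ℕ → H := fun k => ((-1:R)^(k+1)) • convIter R H k x with hgdef
    have hg : ∀ k, ((-1:R)^(k+1)) • convIter R H (k+1) x = -(g (k+1)) := by
      intro k
      rw [hgdef]
      simp [pow_succ, mul_smul]
    have hBneg : ∑ k ∈ Finset.range (N+1), ((-1:R)^(k+1)) • convIter R H (k+1) x
        = ∑ k ∈ Finset.range (N+1), -(g (k+1)) :=
      Finset.sum_congr rfl fun k _ => hg k
    have hsum : ∑ k ∈ Finset.range (N+1), -(g (k+1)) + ∑ k ∈ Finset.range (N+1), g k
        = g 0 - g (N+1) := by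
      rw [← Finset.sum_add_distrib]
      have h' : ∀ k ∈ Finset.range (N+1), -g (k+1) + g k = g k - g (k+1) := by
        intro k _; abel
      rw [Finset.sum_congr rfl h', Finset.sum_range_sub' g]
    have hg0 : g 0 = -x := by simp [hgdef, convIter]
    have hgN : g (N+1) = 0 := by
      rw [hgdef]
      simp only
      rw [hnil n x hn hεx (N+1) (by omega), smul_zero]
    rw [hBneg, add_right_comm, hsum, hg0, hgN]
    abel
  -- extension principle
  have hext : ∀ (D : H →ₗ[R] H), (∀ c : R, D (u c) = 0) →
      (∀ n, ∀ b, b ∈ ℋ n ⊓ K → D b = 0) → D = 0 := by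
    intro D h1 h2
    apply LinearMap.ext
    intro x
    rw [LinearMap.zero_apply]
    have hx : x ∈ (⨆ n, ℋ n) := by rw [hexh]; trivial
    have hle : (⨆ n, ℋ n) ≤ LinearMap.ker D := by
      apply iSup_le
      intro n z hz
      rw [hsplit n] at hz
      obtain ⟨a, ha, b, hb, rfl⟩ := Submodule.mem_sup.1 hz
      obtain ⟨c, rfl⟩ := ha
      rw [LinearMap.mem_ker, map_add, h1 c, h2 n b hb, add_zero]
    exact hle hx
  have hucomul : ∀ c : R, Coalgebra.comul (R := R) (u c) = c • ((1:H) ⊗ₜ[R] (1:H)) := by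
    intro c
    rw [hu]
    simp only [Algebra.linearMap_apply, Algebra.algebraMap_eq_smul_one, map_smul,
      Bialgebra.comul_one, Algebra.TensorProduct.one_def]
  have hεu : ∀ c : R, ε (u c) = c := by
    intro c
    simp [hε, hu]
  -- the two antipode identities
  have hleft : (LinearMap.mul' R H) ∘ₗ (LinearMap.rTensor H S) ∘ₗ Coalgebra.comul
      = (Algebra.linearMap R H) ∘ₗ Coalgebra.counit := by
    have hD : (LinearMap.mul' R H) ∘ₗ (LinearMap.rTensor H S) ∘ₗ
        (Coalgebra.comul (R := R) (A := H)) - u ∘ₗ ε = 0 := by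
      apply hext
      · intro c
        rw [LinearMap.sub_apply, LinearMap.comp_apply, LinearMap.comp_apply,
          LinearMap.comp_apply, hucomul c, map_smul, map_smul, LinearMap.rTensor_tmul,
          LinearMap.mul'_apply, hS1, one_mul, hεu c, hu]
        simp [Algebra.linearMap_apply, Algebra.algebraMap_eq_smul_one]
      · intro n b hb
        have hεb : ε b = 0 := hb.2
        rw [LinearMap.sub_apply, LinearMap.comp_apply, LinearMap.comp_apply,
          LinearMap.comp_apply, hcoreL n b hb.1 hεb, hεb, map_zero, sub_zero]
    rw [sub_eq_zero] at hD
    exact hD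
  have hright : (LinearMap.mul' R H) ∘ₗ (LinearMap.lTensor H S) ∘ₗ Coalgebra.comul
      = (Algebra.linearMap R H) ∘ₗ Coalgebra.counit := by
    have hD : (LinearMap.mul' R H) ∘ₗ (LinearMap.lTensor H S) ∘ₗ
        (Coalgebra.comul (R := R) (A := H)) - u ∘ₗ ε = 0 := by
      apply hext
      · intro c
        rw [LinearMap.sub_apply, LinearMap.comp_apply, LinearMap.comp_apply,
          LinearMap.comp_apply, hucomul c, map_smul, map_smul, LinearMap.lTensor_tmul,
          LinearMap.mul'_apply, hS1, mul_one, hεu c, hu]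
        simp [Algebra.linearMap_apply, Algebra.algebraMap_eq_smul_one]
      · intro n b hb
        have hεb : ε b = 0 := hb.2
        rw [LinearMap.sub_apply, LinearMap.comp_apply, LinearMap.comp_apply,
          LinearMap.comp_apply, hcoreR n b hb.1 hεb, hεb, map_zero, sub_zero]
    rw [sub_eq_zero] at hD
    exact hD
  refine ⟨S, hleft, hright, hS1, ?_⟩
  intro x hεx
  obtain ⟨n, hn⟩ := hdeg x
  constructor
  · have := hred n x (hmono n hn) hεx
    exact Submodule.map₂_le_map₂ inf_le_right inf_le_right this
  · refine ⟨n, fun m hm' => hnil n x hn hεx m hm'.le, ?_⟩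
    rw [hSK x hεx n hn]
    have hins : Finset.range (n+1) = insert 0 (Finset.Icc 1 n) := by
      ext k; simp [Finset.mem_range, Finset.mem_Icc, Finset.mem_insert]; omega
    rw [hins, Finset.sum_insert (by simp)]
    simp [convIter]
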